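/- arXiv:1005.5520 — 2 statements merged into one kernel-verified Lean document; each statement's English description precedes it below -/
import Mathlib

section
/- Let H = (V, E) be a hypergraph with n vertices that is hereditarily k-colorable, and set λ = k/(k−1). If every list L_v satisfies |L_v| > log_λ n, then H admits a unique-maximum coloring from the lists L = {L_v}. -/
open Finset

private lemma um_aux {V : Type} [Fintype V] [DecidableEq V]
    (E : Finset (Finset V)) (k : ℕ) (hk : 2 ≤ k)
    (hered : ∀ V' : Finset V, ∃ c : V → Fin k, ∀ S ∈ E,
        2 ≤ (S ∩ V').card → ∃ u ∈ S ∩ V', ∃ w ∈ S ∩ V', c u ≠ c w) :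
    ∀ N : ℕ, ∀ U : Finset V, U.card ≤ N → ∀ L : V → Finset ℕ,
      (∑ v ∈ U, (((k : ℝ) - 1)/(k : ℝ)) ^ (L v).card < 1) →
      ∃ C : V → ℕ, (∀ v ∈ U, C v ∈ L v) ∧
        ∀ S ∈ E, (S ∩ U).Nonempty → ∃ v ∈ S ∩ U, ∀ u ∈ S ∩ U, u ≠ v → C u < C v := by
  have hk2 : (2:ℝ) ≤ (k:ℝ) := by exact_mod_cast hk
  have hq0 : (0:ℝ) < ((k : ℝ) - 1)/(k : ℝ) := by
    apply div_pos <;> linarith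
  have hq1 : ((k : ℝ) - 1)/(k : ℝ) < 1 := by
    rw [div_lt_one (by linarith)]; linarith
  set q : ℝ := ((k : ℝ) - 1)/(k : ℝ) with hqdef
  intro N
  induction N with
  | zero =>
    intro U hU L _
    have hUe : U = ∅ := card_eq_zero.mp (Nat.le_zero.mp hU)
    subst hUe
    exact ⟨fun _ => 0, by simp, by simp⟩
  | succ N ih =>
    intro U hU L hW
    rcases U.eq_empty_or_nonempty with rfl | hUne
    · exact ⟨fun _ => 0, by simp, by simp⟩
    have hterm : ∀ v ∈ U, q ^ (L v).card < 1 := by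
      intro v hv
      refine lt_of_le_of_lt ?_ hW
      exact Finset.single_le_sum (f := fun u => q ^ (L u).card) (fun u _ => by positivity) hv
    have hLne : ∀ v ∈ U, (L v).Nonempty := by
      intro v hv
      rw [← Finset.card_pos]
      by_contra h
      have h0 : (L v).card = 0 := by omega
      have := hterm v hv
      rw [h0, pow_zero] at this
      exact lt_irrefl _ this
    -- the global minimum m
    have hBne : (U.biUnion L).Nonempty := by
      obtain ⟨v, hv⟩ := hUne
      obtain ⟨x, hx⟩ := hLne v hv
      exact ⟨x, mem_biUnion.mpr ⟨v, hv, hx⟩⟩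
    set m : ℕ := (U.biUnion L).min' hBne with hmdef
    have hm_le : ∀ v ∈ U, ∀ x ∈ L v, m ≤ x := by
      intro v hv x hx
      exact Finset.min'_le _ _ (mem_biUnion.mpr ⟨v, hv, hx⟩)
    have hm_mem : ∃ v ∈ U, m ∈ L v := by
      have := Finset.min'_mem (U.biUnion L) hBne
      rw [mem_biUnion] at this
      exact this
    set A : Finset V := U.filter (fun v => m ∈ L v) with hAdef
    have hAne : A.Nonempty := by
      obtain ⟨v, hv, hmv⟩ := hm_mem
      exact ⟨v, mem_filter.mpr ⟨hv, hmv⟩⟩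
    have hAU : A ⊆ U := filter_subset _ _
    obtain ⟨c, hc⟩ := hered A
    -- choose the best class
    set f : V → ℝ := fun v => q ^ (L v).card with hfdef
    have hfpos : ∀ v, 0 < f v := fun v => by positivity
    have hexists : ∃ i ∈ (Finset.univ : Finset (Fin k)),
        (∑ v ∈ A, f v) / k ≤ ∑ v ∈ A.filter (fun v => c v = i), f v := by
      haveI : Nonempty (Fin k) := ⟨⟨0, by omega⟩⟩
      apply Finset.exists_le_of_sum_le
      · exact Finset.univ_nonempty
      · rw [Finset.sum_const, Finset.card_univ, Fintype.card_fin]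
        rw [Finset.sum_fiberwise]
        rw [nsmul_eq_mul]
        rw [mul_div_cancel₀]
        positivity
    obtain ⟨i, _, hi⟩ := hexists
    set D : Finset V := A.filter (fun v => c v = i) with hDdef
    have hDA : D ⊆ A := filter_subset _ _
    have hDU : D ⊆ U := hDA.trans hAU
    have hApos : 0 < ∑ v ∈ A, f v := Finset.sum_pos (fun v _ => hfpos v) hAne
    have hDne : D.Nonempty := by
      rw [Finset.nonempty_iff_ne_empty]
      intro h
      rw [h, Finset.sum_empty] at hi
      have : (0:ℝ) < (∑ v ∈ A, f v) / k := by positivity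
      linarith
    -- the key potential inequality
    have hAD : ∑ v ∈ A \ D, f v ≤ ((k:ℝ) - 1) * ∑ v ∈ D, f v := by
      have hs : ∑ v ∈ A \ D, f v + ∑ v ∈ D, f v = ∑ v ∈ A, f v :=
        Finset.sum_sdiff hDA
      have : (∑ v ∈ A, f v) ≤ k * ∑ v ∈ D, f v := by
        rw [div_le_iff₀ (by linarith : (0:ℝ) < (k:ℝ))] at hi
        linarith [hi]
      linarith
    set L' : V → Finset ℕ := fun v => (L v).erase m with hL'def
    set U' : Finset V := U \ D with hU'def
    have hcardU' : U'.card ≤ N := by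
      have h1 : U'.card = U.card - D.card := Finset.card_sdiff_of_subset hDU
      have h2 : 0 < D.card := Finset.card_pos.mpr hDne
      omega
    -- new potential < 1
    have hW' : ∑ v ∈ U', q ^ (L' v).card < 1 := by
      have hsplit'' : ∑ v ∈ U', q ^ (L' v).card
          = ∑ v ∈ U'.filter (fun v => m ∈ L v), q ^ (L' v).card
            + ∑ v ∈ U'.filter (fun v => ¬ m ∈ L v), q ^ (L' v).card :=
        (Finset.sum_filter_add_sum_filter_not _ _ _).symm
      have hfil : U'.filter (fun v => m ∈ L v) = A \ D := by
        ext v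
        simp only [hU'def, hAdef, hDdef, Finset.mem_filter, Finset.mem_sdiff]
        tauto
      have hfil2 : ∀ v ∈ U'.filter (fun v => ¬ m ∈ L v), q ^ (L' v).card = f v := by
        intro v hv
        rw [Finset.mem_filter] at hv
        rw [hL'def]
        simp only []
        rw [Finset.erase_eq_of_notMem hv.2]
      have hADval : ∀ v ∈ A \ D, q ^ (L' v).card = f v / q := by
        intro v hv
        have hvA : v ∈ A := (Finset.mem_sdiff.mp hv).1
        have hmv : m ∈ L v := (Finset.mem_filter.mp hvA).2
        have hcard : (L' v).card = (L v).card - 1 := by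
          rw [hL'def]; exact Finset.card_erase_of_mem hmv
        have hc1 : 1 ≤ (L v).card := Finset.card_pos.mpr ⟨m, hmv⟩
        rw [hcard, hfdef]
        simp only []
        rw [eq_div_iff (ne_of_gt hq0), ← pow_succ]
        congr 1
        omega
      rw [hsplit'', hfil, Finset.sum_congr rfl hADval, Finset.sum_congr rfl hfil2]
      have hsum_div : ∑ v ∈ A \ D, f v / q = (∑ v ∈ A \ D, f v) / q := by
        rw [Finset.sum_div]
      rw [hsum_div]
      -- bound: (∑_{A\D} f)/q ≤ ∑_{A\D} f + ∑_D f
      have hqk : (1:ℝ)/q = (k:ℝ)/((k:ℝ)-1) := by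
        rw [hqdef, one_div_div]
      have hkey : (∑ v ∈ A \ D, f v) / q ≤ ∑ v ∈ A \ D, f v + ∑ v ∈ D, f v := by
        have hADpos : (0:ℝ) ≤ ∑ v ∈ A \ D, f v :=
          Finset.sum_nonneg (fun v _ => le_of_lt (hfpos v))
        have hDpos : (0:ℝ) ≤ ∑ v ∈ D, f v :=
          Finset.sum_nonneg (fun v _ => le_of_lt (hfpos v))
        have hkpos : (0:ℝ) < (k:ℝ) := by linarith
        rw [div_le_iff₀ hq0, hqdef, ← mul_div_assoc, le_div_iff₀ hkpos]
        nlinarith [hAD, hADpos, hDpos]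
      have hUsplit : ∑ v ∈ U, f v = ∑ v ∈ U', f v + ∑ v ∈ D, f v := by
        rw [hU'def]
        exact (Finset.sum_sdiff hDU).symm
      have hU'split : ∑ v ∈ U', f v
          = ∑ v ∈ A \ D, f v + ∑ v ∈ U'.filter (fun v => ¬ m ∈ L v), f v := by
        rw [← hfil]
        exact (Finset.sum_filter_add_sum_filter_not _ _ _).symm
      have hWle : ∑ v ∈ U, f v < 1 := hW
      linarith
    obtain ⟨C', hC'mem, hC'um⟩ := ih U' hcardU' L' hW'
    refine ⟨fun v => if v ∈ D then m else C' v, ?_, ?_⟩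
    · intro v hv
      by_cases hvD : v ∈ D
      · simp only [hvD, if_true]
        exact (Finset.mem_filter.mp (hDA hvD)).2
      · simp only [hvD, if_false]
        have hvU' : v ∈ U' := Finset.mem_sdiff.mpr ⟨hv, hvD⟩
        exact Finset.mem_of_mem_erase (hC'mem v hvU')
    · intro S hS hSU
      by_cases h2 : (S ∩ U').Nonempty
      · obtain ⟨v, hvSU', hvmax⟩ := hC'um S hS h2
        have hvS : v ∈ S := (Finset.mem_inter.mp hvSU').1
        have hvU' : v ∈ U' := (Finset.mem_inter.mp hvSU').2
        have hvD : v ∉ D := (Finset.mem_sdiff.mp hvU').2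
        have hvU : v ∈ U := (Finset.mem_sdiff.mp hvU').1
        have hCv : C' v ∈ L' v := hC'mem v hvU'
        have hCvL : C' v ∈ L v := Finset.mem_of_mem_erase hCv
        have hCvne : C' v ≠ m := Finset.ne_of_mem_erase hCv
        have hmlt : m < C' v := lt_of_le_of_ne (hm_le v hvU _ hCvL) (Ne.symm hCvne)
        refine ⟨v, Finset.mem_inter.mpr ⟨hvS, hvU⟩, ?_⟩
        intro u huSU hune
        have huS : u ∈ S := (Finset.mem_inter.mp huSU).1
        have huU : u ∈ U := (Finset.mem_inter.mp huSU).2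
        simp only [hvD, if_false]
        by_cases huD : u ∈ D
        · simp only [huD, if_true]
          exact hmlt
        · simp only [huD, if_false]
          have huU' : u ∈ U' := Finset.mem_sdiff.mpr ⟨huU, huD⟩
          exact hvmax u (Finset.mem_inter.mpr ⟨huS, huU'⟩) hune
      · -- S ∩ U ⊆ D, so it is a singleton
        have hsub : S ∩ U ⊆ D := by
          intro u hu
          have huS : u ∈ S := (Finset.mem_inter.mp hu).1
          have huU : u ∈ U := (Finset.mem_inter.mp hu).2
          by_contra huD
          exact h2 ⟨u, Finset.mem_inter.mpr ⟨huS, Finset.mem_sdiff.mpr ⟨huU, huD⟩⟩⟩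
        have hSA : S ∩ A = S ∩ U := by
          apply Finset.Subset.antisymm
          · exact Finset.inter_subset_inter (Finset.Subset.refl S) hAU
          · intro u hu
            exact Finset.mem_inter.mpr ⟨(Finset.mem_inter.mp hu).1, hDA (hsub hu)⟩
        have hcard1 : (S ∩ U).card ≤ 1 := by
          by_contra h
          push_neg at h
          have h2' : 2 ≤ (S ∩ A).card := by rw [hSA]; omega
          obtain ⟨u, hu, w, hw, hcne⟩ := hc S hS h2'
          rw [hSA] at hu hw
          have hu' : c u = i := (Finset.mem_filter.mp (hsub hu)).2
          have hw' : c w = i := (Finset.mem_filter.mp (hsub hw)).2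
          exact hcne (hu'.trans hw'.symm)
        have hcardeq : (S ∩ U).card = 1 := by
          have := Finset.card_pos.mpr hSU
          omega
        obtain ⟨v, hv⟩ := Finset.card_eq_one.mp hcardeq
        refine ⟨v, by rw [hv]; exact Finset.mem_singleton_self v, ?_⟩
        intro u hu hune
        rw [hv, Finset.mem_singleton] at hu
        exact absurd hu hune

/-- If `H = (V, E)` with `n` vertices is hereditarily `k`-colorable and every list
has size greater than `log_λ n` where `λ = k/(k-1)`, then `H` admits a
unique-maximum coloring from the lists. -/
theorem um_coloring_from_large_lists {V : Type} [Fintype V] [DecidableEq V]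
    (E : Finset (Finset V)) (k : ℕ) (hk : 2 ≤ k)
    (hered : ∀ V' : Finset V, ∃ c : V → Fin k, ∀ S ∈ E,
        2 ≤ (S ∩ V').card → ∃ u ∈ S ∩ V', ∃ w ∈ S ∩ V', c u ≠ c w)
    (L : V → Finset ℕ) (hpos : ∀ v : V, ∀ x ∈ L v, 0 < x)
    (hsize : ∀ v : V,
      Real.logb ((k : ℝ) / ((k : ℝ) - 1)) (Fintype.card V) < ((L v).card : ℝ)) :
    ∃ C : V → ℕ, (∀ v, C v ∈ L v) ∧
      ∀ S ∈ E, S.Nonempty → ∃ v ∈ S, ∀ u ∈ S, u ≠ v → C u < C v := by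
  have hk2 : (2:ℝ) ≤ (k:ℝ) := by exact_mod_cast hk
  have hW : ∑ v ∈ (Finset.univ : Finset V), (((k : ℝ) - 1)/(k : ℝ)) ^ (L v).card < 1 := by
    rcases (Finset.univ : Finset V).eq_empty_or_nonempty with he | hne
    · rw [he, Finset.sum_empty]; norm_num
    · have hn : 0 < Fintype.card V := by
        rw [← Finset.card_univ]
        exact Finset.card_pos.mpr hne
      have hlam : (1:ℝ) < (k:ℝ)/((k:ℝ)-1) := by
        rw [lt_div_iff₀ (by linarith)]
        linarith
      have hterm : ∀ v : V, (((k : ℝ) - 1)/(k : ℝ)) ^ (L v).card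
          < 1 / (Fintype.card V : ℝ) := by
        intro v
        have hs := hsize v
        have hnpos : (0:ℝ) < (Fintype.card V : ℝ) := by exact_mod_cast hn
        have hlt : (Fintype.card V : ℝ) < ((k:ℝ)/((k:ℝ)-1)) ^ ((L v).card : ℝ) := by
          rwa [← Real.logb_lt_iff_lt_rpow hlam hnpos]
        rw [Real.rpow_natCast] at hlt
        have hqi : ((k : ℝ) - 1)/(k : ℝ) = (((k:ℝ)/((k:ℝ)-1)))⁻¹ := by
          rw [inv_div]
        rw [hqi, inv_pow, one_div]
        exact inv_strictAnti₀ hnpos hlt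
      calc ∑ v ∈ (Finset.univ : Finset V), (((k : ℝ) - 1)/(k : ℝ)) ^ (L v).card
          < ∑ v ∈ (Finset.univ : Finset V), 1 / (Fintype.card V : ℝ) :=
            Finset.sum_lt_sum_of_nonempty hne (fun v _ => hterm v)
        _ = 1 := by
            rw [Finset.sum_const, Finset.card_univ, nsmul_eq_mul]
            field_simp
  obtain ⟨C, hCmem, hCum⟩ := um_aux E k hk hered (Finset.univ : Finset V).card
    (Finset.univ : Finset V) le_rfl L hW
  refine ⟨C, fun v => hCmem v (Finset.mem_univ v), ?_⟩
  intro S hS hSne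
  have : (S ∩ Finset.univ).Nonempty := by rwa [Finset.inter_univ]
  obtain ⟨v, hv, hmax⟩ := hCum S hS this
  rw [Finset.inter_univ] at hv hmax
  exact ⟨v, hv, hmax⟩
end

section
/- Let χ_C(H) = k and suppose every vertex list has size k* > k·ln n, where n = |V|. If each color in the union of all lists is assigned independently and uniformly at random to one of the k color classes of an optimal C-coloring, then with positive probability, for every vertex v the sub-list L'_v (colors of L_v assigned to v's class) is nonempty. -/
lemma card_avoid_le {α : Type} [Fintype α] [DecidableEq α] (k : ℕ) (A : Finset α) (x : Fin k) :
    (Finset.univ.filter (fun g : α → Fin k => ∀ a ∈ A, g a ≠ x)).card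
      ≤ (k-1)^A.card * k^(Fintype.card α - A.card) := by
  classical
  rw [← Fintype.card_subtype]
  have hinj : Function.Injective
      (fun g : {g : α → Fin k // ∀ a ∈ A, g a ≠ x} =>
        ((fun a : {a // a ∈ A} => (⟨g.1 a.1, g.2 a.1 a.2⟩ : {y : Fin k // y ≠ x})),
         (fun a : {a // a ∈ (Aᶜ : Finset α)} => g.1 a.1))) := by
    rintro ⟨g1, h1⟩ ⟨g2, h2⟩ h
    simp only [Prod.mk.injEq] at h
    apply Subtype.ext; funext a
    by_cases ha : a ∈ A
    · exact congrArg Subtype.val (congrFun h.1 ⟨a, ha⟩)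
    · exact congrFun h.2 ⟨a, Finset.mem_compl.mpr ha⟩
  have := Fintype.card_le_of_injective _ hinj
  calc Fintype.card {g : α → Fin k // ∀ a ∈ A, g a ≠ x} ≤ _ := this
    _ = (k-1)^A.card * k^(Fintype.card α - A.card) := by
        rw [Fintype.card_prod, Fintype.card_fun, Fintype.card_fun]
        simp [Fintype.card_subtype_compl, Finset.card_compl]

lemma key_ineq (n k kstar : ℕ) (hn : 1 ≤ n) (hk1 : 1 ≤ k)
    (hk : (k : ℝ) * Real.log n < (kstar : ℝ)) :
    n * (k-1)^kstar < k^kstar := by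
  have hlogn : (0:ℝ) ≤ Real.log n := Real.log_natCast_nonneg n
  have hks : 1 ≤ kstar := by
    by_contra h
    push_neg at h
    interval_cases kstar
    · simp at hk
      nlinarith [hlogn, (by exact_mod_cast hk1 : (1:ℝ) ≤ (k:ℝ))]
  rcases eq_or_lt_of_le hk1 with h1 | h2
  · -- k = 1
    rw [← h1]
    have h0 : (1-1:ℕ) = 0 := rfl
    rw [h0, Nat.zero_pow (by omega : 0 < kstar), Nat.mul_zero, Nat.one_pow]
    exact Nat.one_pos
  · -- k ≥ 2
    have hk2 : 2 ≤ k := h2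
    have hkR : (0:ℝ) < k := by positivity
    have hk1R : (0:ℝ) < (k:ℝ) - 1 := by
      have : (2:ℝ) ≤ k := by exact_mod_cast hk2
      linarith
    -- log((k-1)/k) ≤ -1/k
    have hlog : Real.log (((k:ℝ)-1)/k) ≤ ((k:ℝ)-1)/k - 1 :=
      Real.log_le_sub_one_of_pos (by positivity)
    have hstep : Real.log ((k:ℝ)-1) - Real.log k ≤ -(1/k) := by
      rw [← Real.log_div (by linarith) (by linarith)] 
      have : ((k:ℝ)-1)/k - 1 = -(1/k) := by field_simp; ring
      linarith [hlog, this.le]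
    -- goal in ℝ
    have hreal : (n:ℝ) * ((k:ℝ)-1)^kstar < (k:ℝ)^kstar := by
      have hL : (0:ℝ) < (n:ℝ) * ((k:ℝ)-1)^kstar := by positivity
      refine (Real.log_lt_log_iff hL (by positivity)).mp ?_
      rw [Real.log_mul (by positivity) (by positivity), Real.log_pow, Real.log_pow]
      have hdiv : Real.log n < (kstar:ℝ) / k := by
        rw [lt_div_iff₀ hkR]; nlinarith [hk]
      have : (kstar:ℝ) * (Real.log k - Real.log ((k:ℝ)-1)) ≥ (kstar:ℝ) * (1/k) := by
        apply mul_le_mul_of_nonneg_left _ (by positivity)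
        linarith [hstep]
      have hks' : (kstar:ℝ)/k = (kstar:ℝ) * (1/k) := by ring
      nlinarith [hdiv, this]
    have : ((n * (k-1)^kstar : ℕ) : ℝ) < ((k^kstar : ℕ) : ℝ) := by
      push_cast [Nat.cast_sub hk1]
      convert hreal using 2
    exact_mod_cast this

/-- Probabilistic lemma: if the vertices are partitioned into `k` classes by `cl`,
every list has size `k* > k · ln n`, and each color of the union of the lists is
assigned to one of the `k` classes, then with positive probability (equivalently:
for a positive number of assignments `g` of classes to colors) every vertex `v`
retains some color of its list assigned to `v`'s class. -/
theorem exists_assignment_lists_nonempty {V : Type} [Fintype V] [DecidableEq V]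
    (k : ℕ) (cl : V → Fin k) (L : V → Finset ℕ) (kstar : ℕ)
    (hsize : ∀ v : V, (L v).card = kstar)
    (hk : (k : ℝ) * Real.log (Fintype.card V) < (kstar : ℝ)) :
    0 < Nat.card {g : {c : ℕ // c ∈ Finset.univ.biUnion L} → Fin k //
        ∀ v : V, ∃ c : ℕ, ∃ h : c ∈ L v,
          g ⟨c, Finset.mem_biUnion.mpr ⟨v, Finset.mem_univ v, h⟩⟩ = cl v} := by
  classical
  set S := Finset.univ.biUnion L with hS
  rw [Nat.card_pos_iff]
  constructor
  swap
  · infer_instance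
  rw [nonempty_subtype]
  by_cases hV : IsEmpty V
  · refine ⟨fun c => absurd c.2 (by simp [hS, Finset.univ_eq_empty]), fun v => (hV.false v).elim⟩
  rw [not_isEmpty_iff] at hV
  have hn : 1 ≤ Fintype.card V := Fintype.card_pos
  have hk1 : 1 ≤ k := (cl hV.some).pos
  by_contra hcon
  push_neg at hcon
  set A : V → Finset {c : ℕ // c ∈ S} := fun v =>
    Finset.univ.filter (fun c => (c : ℕ) ∈ L v) with hA
  set Bad : V → Finset ({c : ℕ // c ∈ S} → Fin k) := fun v =>
    Finset.univ.filter (fun g => ∀ a ∈ A v, g a ≠ cl v) with hBad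
  have hcover : (Finset.univ : Finset ({c : ℕ // c ∈ S} → Fin k))
      ⊆ Finset.univ.biUnion Bad := by
    intro g _
    obtain ⟨v, hv⟩ := hcon g
    refine Finset.mem_biUnion.mpr ⟨v, Finset.mem_univ v, ?_⟩
    rw [hBad, Finset.mem_filter]
    refine ⟨Finset.mem_univ g, fun a ha => ?_⟩
    have haL : (a : ℕ) ∈ L v := (Finset.mem_filter.mp ha).2
    have := hv a.1 haL
    simpa using this
  have hAcard : ∀ v, (A v).card = kstar := by
    intro v
    rw [← hsize v]
    apply Finset.card_bij (fun (a : {c : ℕ // c ∈ S}) _ => (a : ℕ))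
    · intro a ha; exact (Finset.mem_filter.mp ha).2
    · intro a _ b _ hab; exact Subtype.ext hab
    · intro b hb
      exact ⟨⟨b, Finset.mem_biUnion.mpr ⟨v, Finset.mem_univ v, hb⟩⟩,
        Finset.mem_filter.mpr ⟨Finset.mem_univ _, hb⟩, rfl⟩
  set N := Fintype.card {c : ℕ // c ∈ S} with hN
  have hkN : kstar ≤ N := by
    rw [← hAcard hV.some, hN, ← Finset.card_univ]
    exact Finset.card_le_card (Finset.subset_univ _)
  have htot : (Finset.univ : Finset ({c : ℕ // c ∈ S} → Fin k)).card = k ^ N := by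
    rw [Finset.card_univ, Fintype.card_fun, Fintype.card_fin]
  have hbound : k ^ N ≤ Fintype.card V * ((k-1)^kstar * k^(N - kstar)) := by
    calc k ^ N = (Finset.univ : Finset ({c : ℕ // c ∈ S} → Fin k)).card := htot.symm
      _ ≤ (Finset.univ.biUnion Bad).card := Finset.card_le_card hcover
      _ ≤ ∑ v : V, (Bad v).card := Finset.card_biUnion_le
      _ ≤ ∑ _v : V, (k-1)^kstar * k^(N - kstar) := by
          apply Finset.sum_le_sum
          intro v _
          have := card_avoid_le k (A v) (cl v)
          rwa [hAcard v] at this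
      _ = Fintype.card V * ((k-1)^kstar * k^(N - kstar)) := by
          rw [Finset.sum_const, Finset.card_univ, smul_eq_mul]
  have hkey : Fintype.card V * (k-1)^kstar < k^kstar := key_ineq _ _ _ hn hk1 hk
  have hlt : Fintype.card V * ((k-1)^kstar * k^(N - kstar)) < k ^ N := by
    calc Fintype.card V * ((k-1)^kstar * k^(N - kstar))
        = (Fintype.card V * (k-1)^kstar) * k^(N - kstar) := by ring
      _ < k^kstar * k^(N - kstar) :=
          (Nat.mul_lt_mul_right (Nat.pow_pos hk1)).mpr hkey
      _ = k ^ N := by rw [← pow_add]; congr 1; omega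
  omega
end
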